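/- A finite unordered rooted tree τ is self-nested if and only if, for every pair of heights 0 ≤ h2 < h1 ≤ H(τ), all the components of the vector ρ_τ(h1,h2) of its height profile are equal. -/

import Mathlib

/-- A finite rooted tree whose vertices form a finite subset `supp` of `ℕ`.
`par` maps each vertex to its parent; the root is a fixed point of `par`
(so it has no parent), and every vertex reaches the root by iterating `par`
(connectedness / acyclicity). -/
structure FTree where
  supp : Finset ℕ
  root : ℕ
  root_mem : root ∈ supp
  par : ℕ → ℕ
  par_mem : ∀ v ∈ supp, par v ∈ supp
  par_root : par root = root
  reach : ∀ v ∈ supp, ∃ n, par^[n] v = root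

namespace FTree

/-- Depth of a vertex: least number of parent steps needed to reach the root. -/
noncomputable def depth (t : FTree) (v : ℕ) : ℕ :=
  if h : v ∈ t.supp then Nat.find (t.reach v h) else 0

/-- `w` is a (weak) descendant of `v` in `t`. -/
def IsDesc (t : FTree) (v w : ℕ) : Prop :=
  w ∈ t.supp ∧ ∃ n ≤ t.depth w, t.par^[n] w = v

open Classical in
/-- Vertex set of the subtree `t[v]` rooted at `v`. -/
noncomputable def desc (t : FTree) (v : ℕ) : Finset ℕ :=
  t.supp.filter (fun w => t.IsDesc v w)

/-- Height of the subtree `t[v]` rooted at `v`. -/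
noncomputable def heightAt (t : FTree) (v : ℕ) : ℕ :=
  (t.desc v).sup (fun w => t.depth w) - t.depth v

/-- Height of the tree. -/
noncomputable def height (t : FTree) : ℕ := t.heightAt t.root

/-- The set of children of `v` in `t`. -/
def children (t : FTree) (v : ℕ) : Finset ℕ :=
  t.supp.filter (fun w => t.par w = v ∧ w ≠ t.root)

open Classical in
/-- `γ_h(v)`: number of children of `v` whose subtree has height `h`. -/
noncomputable def gam (t : FTree) (v h : ℕ) : ℕ :=
  ((t.children v).filter (fun c => t.heightAt c = h)).card

/-- The subtree of `t` rooted at `v` is isomorphic (as an unordered rooted tree)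
to the subtree of `s` rooted at `w`: a bijection between the vertex sets sending
root to root and commuting with the parent maps (i.e. mapping edges to edges). -/
def SubtreeIso (t : FTree) (v : ℕ) (s : FTree) (w : ℕ) : Prop :=
  ∃ φ : ℕ → ℕ, Set.BijOn φ (t.desc v : Set ℕ) (s.desc w : Set ℕ) ∧ φ v = w ∧
    ∀ x ∈ t.desc v, x ≠ v → φ (t.par x) = s.par (φ x)

/-- Isomorphism of rooted trees. -/
def TreeIso (t s : FTree) : Prop := SubtreeIso t t.root s s.root

/-- A tree is self-nested if any two of its subtrees of the same height
are isomorphic. -/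
def SelfNested (t : FTree) : Prop :=
  ∀ v ∈ t.supp, ∀ w ∈ t.supp, t.heightAt v = t.heightAt w → SubtreeIso t v t w

open Classical in
/-- Height profile entry `ρ_t(h1,h2)`: the multiset (family up to permutation) of
the values `γ_{h2}(v)` over all vertices `v` of `t` with `H(t[v]) = h1`. -/
noncomputable def profile (t : FTree) (h1 h2 : ℕ) : Multiset ℕ :=
  (t.supp.filter (fun v => t.heightAt v = h1)).val.map (fun v => t.gam v h2)

/-- Number of vertices of `t`. -/
def numV (t : FTree) : ℕ := t.supp.card

/-- `a` is a (weak) ancestor of `b`. -/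
def IsAnc (t : FTree) (a b : ℕ) : Prop := ∃ n, t.par^[n] b = a

/-- `a` is a proper ancestor of `b`. -/
def ProperAnc (t : FTree) (a b : ℕ) : Prop := a ≠ b ∧ t.IsAnc a b

/-- `l` is the least common ancestor of `a` and `b`. -/
def IsLCA (t : FTree) (a b l : ℕ) : Prop :=
  l ∈ t.supp ∧ t.IsAnc l a ∧ t.IsAnc l b ∧
    ∀ m ∈ t.supp, t.IsAnc m a → t.IsAnc m b → t.IsAnc m l

/-- `φ`, restricted to the domain `D ⊆ t.supp`, is a constrained mapping in the
sense of Zhang from `t` to `s`: a one-to-one correspondence preserving the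
ancestor order, satisfying moreover Zhang's condition on least common ancestors. -/
def ZhangMapping (t s : FTree) (D : Finset ℕ) (φ : ℕ → ℕ) : Prop :=
  D ⊆ t.supp ∧ (∀ x ∈ D, φ x ∈ s.supp) ∧ Set.InjOn φ (D : Set ℕ) ∧
  (∀ a ∈ D, ∀ b ∈ D, (t.ProperAnc a b ↔ s.ProperAnc (φ a) (φ b))) ∧
  (∀ v1 ∈ D, ∀ v2 ∈ D, ∀ v3 ∈ D, ∀ l l',
    t.IsLCA v1 v2 l → s.IsLCA (φ v1) (φ v2) l' →
    (t.ProperAnc l v3 ↔ s.ProperAnc l' (φ v3)))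

/-- Allowed inserting operation (AI): adding a new internal vertex `w` as a child of
`v`, making `w` the parent of the child `c` of `v`; allowed only if
`H(t[c]) + 1 < H(t[v])`. -/
def InsertAI (t θ : FTree) : Prop :=
  ∃ v c w, v ∈ t.supp ∧ c ∈ t.children v ∧ w ∉ t.supp ∧
    t.heightAt c + 1 < t.heightAt v ∧
    θ.supp = insert w t.supp ∧ θ.root = t.root ∧
    θ.par w = v ∧ θ.par c = w ∧ ∀ x ∈ t.supp, x ≠ c → θ.par x = t.par x

/-- Allowed inserting operation (AS): attaching a tree `s` as a new child subtree of
`v`; allowed only if `H(s) + 1 ≤ H(t[v])`. -/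
def InsertAS (t θ : FTree) : Prop :=
  ∃ (v : ℕ) (s : FTree), v ∈ t.supp ∧ Disjoint s.supp t.supp ∧
    s.height + 1 ≤ t.heightAt v ∧
    θ.supp = t.supp ∪ s.supp ∧ θ.root = t.root ∧ θ.par s.root = v ∧
    (∀ x ∈ t.supp, θ.par x = t.par x) ∧ (∀ x ∈ s.supp, x ≠ s.root → θ.par x = s.par x)

/-- One allowed inserting operation. -/
def InsertStep (t θ : FTree) : Prop := InsertAI t θ ∨ InsertAS t θ

/-- Allowed deleting operation (DI): deleting an internal vertex `v`, child of `u`,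
having a unique child `c` (which becomes a child of `u`); allowed only if `u` has
another child `v'` with `H(t[v']) ≥ H(t[v])`. -/
def DeleteDI (t θ : FTree) : Prop :=
  ∃ u v c, v ∈ t.children u ∧ t.children v = {c} ∧
    (∃ v' ∈ t.children u, v' ≠ v ∧ t.heightAt v ≤ t.heightAt v') ∧
    θ.supp = t.supp.erase v ∧ θ.root = t.root ∧ θ.par c = u ∧
    ∀ x ∈ t.supp, x ≠ v → x ≠ c → θ.par x = t.par x

/-- Allowed deleting operation (DS): deleting the whole subtree rooted at a child `w`
of `v`; allowed only if `v` has another child `w'` with `H(t[w']) + 1 = H(t[v])`. -/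
def DeleteDS (t θ : FTree) : Prop :=
  ∃ v w, w ∈ t.children v ∧
    (∃ w' ∈ t.children v, w' ≠ w ∧ t.heightAt w' + 1 = t.heightAt v) ∧
    θ.supp = t.supp \ t.desc w ∧ θ.root = t.root ∧
    ∀ x ∈ θ.supp, θ.par x = t.par x

/-- One allowed deleting operation. -/
def DeleteStep (t θ : FTree) : Prop := DeleteDI t θ ∨ DeleteDS t θ

/-- A general single-vertex inserting operation: a new vertex `w` is added as a child
of `v`, and the vertices of a subset `C` of the children of `v` become children of `w`. -/
def GeneralInsert (t θ : FTree) : Prop :=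
  ∃ (v w : ℕ) (C : Finset ℕ), v ∈ t.supp ∧ w ∉ t.supp ∧ C ⊆ t.children v ∧
    θ.supp = insert w t.supp ∧ θ.root = t.root ∧ θ.par w = v ∧
    (∀ x ∈ C, θ.par x = w) ∧ ∀ x ∈ t.supp, x ∉ C → θ.par x = t.par x

/-- Cost of a constrained mapping with domain `D`: vertices of `t` not in the domain
are deleted, vertices of `s` not in the image are inserted (unit costs). -/
def mappingCost (t s : FTree) (D : Finset ℕ) (φ : ℕ → ℕ) : ℕ :=
  (t.numV - D.card) + (s.numV - (D.image φ).card)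

/-- Zhang's constrained edit distance between unordered trees: the minimal cost
associated with a constrained mapping between `t` and `s`. -/
noncomputable def DZ (t s : FTree) : ℕ :=
  sInf { c | ∃ (D : Finset ℕ) (φ : ℕ → ℕ), ZhangMapping t s D φ ∧ c = mappingCost t s D φ }

end FTree
namespace FTree

variable (t : FTree)

lemma iterate_mem {v : ℕ} (hv : v ∈ t.supp) (n : ℕ) : t.par^[n] v ∈ t.supp := by
  induction n with
  | zero => simpa
  | succ n ih => rw [Function.iterate_succ_apply']; exact t.par_mem _ ih

lemma depth_spec {v : ℕ} (hv : v ∈ t.supp) : t.par^[t.depth v] v = t.root := by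
  rw [depth, dif_pos hv]; exact Nat.find_spec (t.reach v hv)

lemma depth_min {v : ℕ} (hv : v ∈ t.supp) {n : ℕ} (hn : n < t.depth v) :
    t.par^[n] v ≠ t.root := by
  rw [depth, dif_pos hv] at hn
  exact Nat.find_min (t.reach v hv) hn

lemma depth_root : t.depth t.root = 0 := by
  have h := t.depth_spec t.root_mem
  by_contra h0
  exact t.depth_min t.root_mem (Nat.pos_of_ne_zero h0) rfl

lemma depth_pos {v : ℕ} (hv : v ∈ t.supp) (hne : v ≠ t.root) : 0 < t.depth v := by
  rcases Nat.eq_zero_or_pos (t.depth v) with h | h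
  · exact absurd (by simpa [h] using t.depth_spec hv) hne
  · exact h

lemma depth_par {v : ℕ} (hv : v ∈ t.supp) (hne : v ≠ t.root) :
    t.depth (t.par v) = t.depth v - 1 := by
  have hp : t.par v ∈ t.supp := t.par_mem v hv
  have hd0 : 0 < t.depth v := t.depth_pos hv hne
  have hle : t.depth (t.par v) ≤ t.depth v - 1 := by
    by_contra h
    push_neg at h
    have : t.par^[t.depth v - 1] (t.par v) ≠ t.root := t.depth_min hp h
    apply this
    rw [← Function.iterate_succ_apply, Nat.succ_eq_add_one, Nat.sub_add_cancel hd0]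
    exact t.depth_spec hv
  have hge : t.depth v - 1 ≤ t.depth (t.par v) := by
    by_contra h
    push_neg at h
    have h2 : t.depth (t.par v) + 1 < t.depth v := by omega
    have : t.par^[t.depth (t.par v) + 1] v ≠ t.root := t.depth_min hv h2
    apply this
    rw [Function.iterate_succ_apply]
    exact t.depth_spec hp
  omega

lemma depth_iterate {v : ℕ} (hv : v ∈ t.supp) {n : ℕ} (hn : n ≤ t.depth v) :
    t.depth (t.par^[n] v) = t.depth v - n := by
  induction n with
  | zero => simp
  | succ n ih =>
    have hn' : n ≤ t.depth v := by omega
    have h1 := ih hn'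
    have hmem : t.par^[n] v ∈ t.supp := t.iterate_mem hv n
    have hne : t.par^[n] v ≠ t.root := t.depth_min hv (by omega)
    rw [Function.iterate_succ_apply', t.depth_par hmem hne, h1]
    try omega

lemma mem_desc {v w : ℕ} : w ∈ t.desc v ↔ w ∈ t.supp ∧ ∃ n ≤ t.depth w, t.par^[n] w = v := by
  classical
  unfold desc
  rw [Finset.mem_filter]
  unfold IsDesc
  tauto

lemma desc_subset_supp (v : ℕ) : t.desc v ⊆ t.supp := fun w hw => (t.mem_desc.1 hw).1

lemma mem_desc_self {v : ℕ} (hv : v ∈ t.supp) : v ∈ t.desc v :=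
  (t.mem_desc).2 ⟨hv, 0, Nat.zero_le _, rfl⟩

lemma depth_le_of_mem_desc {v w : ℕ} (h : w ∈ t.desc v) : t.depth v ≤ t.depth w := by
  rw [mem_desc] at h
  obtain ⟨hw, n, hn, heq⟩ := h
  have := t.depth_iterate hw hn
  rw [heq] at this
  omega

/-- The witness `n` for descent is exactly the relative depth. -/
lemma desc_rel {v w : ℕ} (h : w ∈ t.desc v) :
    t.par^[t.depth w - t.depth v] w = v := by
  rw [mem_desc] at h
  obtain ⟨hw, n, hn, heq⟩ := h
  have := t.depth_iterate hw hn
  rw [heq] at this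
  have : n = t.depth w - t.depth v := by omega
  rwa [← this]

lemma mem_desc_of_rel {v w : ℕ} (hw : w ∈ t.supp) (hle : t.depth v ≤ t.depth w)
    (h : t.par^[t.depth w - t.depth v] w = v) : w ∈ t.desc v :=
  (t.mem_desc).2 ⟨hw, t.depth w - t.depth v, by omega, h⟩

lemma desc_trans {v x w : ℕ} (hx : x ∈ t.desc v) (hw : w ∈ t.desc x) : w ∈ t.desc v := by
  have hxs := t.desc_subset_supp v hx
  have hws := t.desc_subset_supp x hw
  have h1 := t.desc_rel hx
  have h2 := t.desc_rel hw
  have hd1 := t.depth_le_of_mem_desc hx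
  have hd2 := t.depth_le_of_mem_desc hw
  apply t.mem_desc_of_rel hws (by omega)
  have heq : t.depth w - t.depth v = (t.depth x - t.depth v) + (t.depth w - t.depth x) := by omega
  rw [heq, Function.iterate_add_apply, h2, h1]

lemma eq_root_of_root_mem_desc {v : ℕ} (hroot : t.root ∈ t.desc v) : v = t.root := by
  have h1 := t.desc_rel hroot
  have h2 := t.depth_le_of_mem_desc hroot
  rw [t.depth_root] at h2
  have h3 : t.depth v = 0 := Nat.le_zero.1 h2
  simpa [t.depth_root, h3] using h1.symm


lemma mem_children {v c : ℕ} :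
    c ∈ t.children v ↔ c ∈ t.supp ∧ t.par c = v ∧ c ≠ t.root := by
  simp [children]

lemma depth_child {v c : ℕ} (hc : c ∈ t.children v) : t.depth c = t.depth v + 1 := by
  rw [mem_children] at hc
  obtain ⟨hcs, hpar, hne⟩ := hc
  have := t.depth_par hcs hne
  have hpos := t.depth_pos hcs hne
  rw [hpar] at this
  omega

lemma child_mem_desc {v c : ℕ} (hc : c ∈ t.children v) : c ∈ t.desc v := by
  have hd := t.depth_child hc
  rw [mem_children] at hc
  exact t.mem_desc.2 ⟨hc.1, 1, by omega, by simpa using hc.2.1⟩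

lemma desc_nonempty {v : ℕ} (hv : v ∈ t.supp) : (t.desc v).Nonempty :=
  ⟨v, t.mem_desc_self hv⟩

lemma heightAt_eq_sup {v : ℕ} (hv : v ∈ t.supp) :
    t.heightAt v = (t.desc v).sup (fun y => t.depth y - t.depth v) := by
  rw [heightAt]
  apply le_antisymm
  · have h : (t.desc v).sup (fun w => t.depth w) ≤
        (t.desc v).sup (fun y => t.depth y - t.depth v) + t.depth v := by
      apply Finset.sup_le
      intro y hy
      have h1 : (fun y => t.depth y - t.depth v) y ≤
          (t.desc v).sup (fun y => t.depth y - t.depth v) :=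
        Finset.le_sup (f := fun y => t.depth y - t.depth v) hy
      have h2 := t.depth_le_of_mem_desc hy
      simp only at h1
      omega
    omega
  · apply Finset.sup_le
    intro y hy
    have h1 : (fun w => t.depth w) y ≤ (t.desc v).sup (fun w => t.depth w) := Finset.le_sup hy
    simp only at h1
    omega

lemma relDepth_le_heightAt {v y : ℕ} (hv : v ∈ t.supp) (hy : y ∈ t.desc v) :
    t.depth y - t.depth v ≤ t.heightAt v := by
  rw [t.heightAt_eq_sup hv]
  exact Finset.le_sup (f := fun y => t.depth y - t.depth v) hy

lemma exists_max_desc {v : ℕ} (hv : v ∈ t.supp) :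
    ∃ y ∈ t.desc v, t.depth y - t.depth v = t.heightAt v := by
  obtain ⟨y, hy, hmax⟩ := Finset.exists_mem_eq_sup (t.desc v) (t.desc_nonempty hv)
    (fun y => t.depth y - t.depth v)
  exact ⟨y, hy, by rw [t.heightAt_eq_sup hv, hmax]⟩

lemma eq_of_relDepth_zero {v y : ℕ} (hy : y ∈ t.desc v) (h : t.depth y = t.depth v) :
    y = v := by
  have h2 := t.desc_rel hy
  simpa [h] using h2

lemma exists_child_of_mem_desc {v y : ℕ} (hy : y ∈ t.desc v) (hne : y ≠ v) :
    ∃ c ∈ t.children v, y ∈ t.desc c := by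
  have hys := t.desc_subset_supp v hy
  have hrel := t.desc_rel hy
  have hdle := t.depth_le_of_mem_desc hy
  set k := t.depth y - t.depth v with hk
  have hk1 : 1 ≤ k := by
    rcases Nat.eq_zero_or_pos k with h0 | h1
    · exact absurd (t.eq_of_relDepth_zero hy (by omega)) hne
    · exact h1
  set c := t.par^[k-1] y with hc
  have hcs : c ∈ t.supp := t.iterate_mem hys _
  have hdc : t.depth c = t.depth y - (k - 1) := t.depth_iterate hys (by omega)
  have hpc : t.par c = v := by
    have h1 : t.par c = t.par^[1] (t.par^[k-1] y) := by rw [hc, Function.iterate_one]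
    rw [h1, ← Function.iterate_add_apply]
    have h2 : 1 + (k-1) = k := by omega
    rw [h2, hrel]
  have hcr : c ≠ t.root := by
    intro h
    have : t.depth c = 0 := by rw [h, t.depth_root]
    omega
  refine ⟨c, t.mem_children.2 ⟨hcs, hpc, hcr⟩, ?_⟩
  apply t.mem_desc_of_rel hys (by omega)
  have : t.depth y - t.depth c = k - 1 := by omega
  rw [this]

lemma child_unique {v c c' y : ℕ} (hc : c ∈ t.children v) (hc' : c' ∈ t.children v)
    (hy : y ∈ t.desc c) (hy' : y ∈ t.desc c') : c = c' := by
  have h1 := t.desc_rel hy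
  have h2 := t.desc_rel hy'
  rw [t.depth_child hc] at h1
  rw [t.depth_child hc'] at h2
  rw [← h1, ← h2]

lemma desc_child_subset {v c : ℕ} (hc : c ∈ t.children v) : t.desc c ⊆ t.desc v :=
  fun y hy => t.desc_trans (t.child_mem_desc hc) hy

lemma not_mem_desc_child {v c : ℕ} (hc : c ∈ t.children v) : v ∉ t.desc c := by
  intro h
  have := t.depth_le_of_mem_desc h
  have := t.depth_child hc
  omega

lemma heightAt_pos_of_child {v c : ℕ} (hc : c ∈ t.children v) : 0 < t.heightAt v := by
  have hv : v ∈ t.supp := by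
    have := (t.mem_children.1 hc).2.1
    rw [← this]
    exact t.par_mem _ (t.mem_children.1 hc).1
  have h1 := t.relDepth_le_heightAt hv (t.child_mem_desc hc)
  have h2 := t.depth_child hc
  omega

lemma heightAt_child_lt {v c : ℕ} (hc : c ∈ t.children v) : t.heightAt c < t.heightAt v := by
  have hv : v ∈ t.supp := by
    have := (t.mem_children.1 hc).2.1
    rw [← this]
    exact t.par_mem _ (t.mem_children.1 hc).1
  have hcs : c ∈ t.supp := (t.mem_children.1 hc).1
  have hpos := t.heightAt_pos_of_child hc
  have hdc := t.depth_child hc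
  have : t.heightAt c ≤ t.heightAt v - 1 := by
    rw [t.heightAt_eq_sup hcs]
    apply Finset.sup_le
    intro y hy
    have h1 := t.relDepth_le_heightAt hv (t.desc_child_subset hc hy)
    have h2 := t.depth_le_of_mem_desc hy
    omega
  omega

lemma desc_eq_singleton_of_heightAt_zero {v : ℕ} (hv : v ∈ t.supp) (h : t.heightAt v = 0) :
    t.desc v = {v} := by
  apply Finset.eq_singleton_iff_unique_mem.2
  refine ⟨t.mem_desc_self hv, fun y hy => ?_⟩
  have h1 := t.relDepth_le_heightAt hv hy
  have h2 := t.depth_le_of_mem_desc hy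
  exact t.eq_of_relDepth_zero hy (by omega)

lemma exists_child_heightAt_pred {v : ℕ} (hv : v ∈ t.supp) (h : 0 < t.heightAt v) :
    ∃ c ∈ t.children v, t.heightAt c + 1 = t.heightAt v := by
  obtain ⟨y, hy, hmax⟩ := t.exists_max_desc hv
  have hne : y ≠ v := by
    intro he
    rw [he] at hmax
    omega
  obtain ⟨c, hc, hyc⟩ := t.exists_child_of_mem_desc hy hne
  have hcs : c ∈ t.supp := (t.mem_children.1 hc).1
  have h1 : t.depth y - t.depth c ≤ t.heightAt c := t.relDepth_le_heightAt hcs hyc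
  have h2 := t.heightAt_child_lt hc
  have hdc := t.depth_child hc
  have hdy := t.depth_le_of_mem_desc hy
  exact ⟨c, hc, by omega⟩

lemma desc_root : t.desc t.root = t.supp := by
  apply Finset.Subset.antisymm (t.desc_subset_supp _)
  intro y hy
  exact t.mem_desc.2 ⟨hy, t.depth y, le_refl _, t.depth_spec hy⟩

lemma heightAt_le_height {v : ℕ} (hv : v ∈ t.supp) : t.heightAt v ≤ t.height := by
  rw [height, t.heightAt_eq_sup t.root_mem, t.heightAt_eq_sup hv, t.desc_root]
  apply Finset.sup_le
  intro y hy
  have hys := t.desc_subset_supp v hy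
  have : t.depth y - t.depth t.root ≤ t.supp.sup (fun y => t.depth y - t.depth t.root) :=
    Finset.le_sup (f := fun y => t.depth y - t.depth t.root) hys
  rw [t.depth_root] at this ⊢
  omega


lemma par_mem_desc_of_ne {v y : ℕ} (hy : y ∈ t.desc v) (hne : y ≠ v) :
    t.par y ∈ t.desc v ∧ t.depth (t.par y) + 1 = t.depth y := by
  have hys := t.desc_subset_supp v hy
  have hrel := t.desc_rel hy
  have hdle := t.depth_le_of_mem_desc hy
  have hk1 : 1 ≤ t.depth y - t.depth v := by
    rcases Nat.eq_zero_or_pos (t.depth y - t.depth v) with h0 | h1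
    · exact absurd (t.eq_of_relDepth_zero hy (by omega)) hne
    · exact h1
  have hyroot : y ≠ t.root := by
    intro h
    have hz : t.depth y = 0 := by rw [h, t.depth_root]
    omega
  have hdp := t.depth_par hys hyroot
  have hdpos := t.depth_pos hys hyroot
  constructor
  · apply t.mem_desc_of_rel (t.par_mem y hys) (by omega)
    have h2 : t.depth (t.par y) - t.depth v = (t.depth y - t.depth v) - 1 := by omega
    rw [h2]
    have h3 : t.depth y - t.depth v = ((t.depth y - t.depth v) - 1) + 1 := by omega
    rw [h3, Function.iterate_succ_apply] at hrel
    exact hrel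
  · omega

lemma mem_desc_par {z : ℕ} (hz : z ∈ t.supp) (h : z ≠ t.root) : z ∈ t.desc (t.par z) := by
  have hdp := t.depth_par hz h
  have hdpos := t.depth_pos hz h
  apply t.mem_desc_of_rel hz (by omega)
  have : t.depth z - t.depth (t.par z) = 1 := by omega
  rw [this, Function.iterate_one]

lemma root_not_mem_desc {v : ℕ} (hv : t.root ∈ t.desc v) : v = t.root :=
  t.eq_root_of_root_mem_desc hv

lemma gam_eq_of_subtreeIso {v w : ℕ} (hv : v ∈ t.supp) (hw : w ∈ t.supp)
    (h : SubtreeIso t v t w) (h2 : ℕ) : t.gam v h2 = t.gam w h2 := by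
  classical
  obtain ⟨φ, hbij, hv0, hcomm⟩ := h
  have hmaps : ∀ y ∈ t.desc v, φ y ∈ t.desc w := fun y hy => hbij.mapsTo hy
  have hinj : ∀ y ∈ t.desc v, ∀ y' ∈ t.desc v, φ y = φ y' → y = y' :=
    fun y hy y' hy' he => hbij.injOn hy hy' he
  have hsurj : ∀ z ∈ t.desc w, ∃ y ∈ t.desc v, φ y = z := fun z hz => hbij.surjOn hz
  -- ISO1: depth preservation
  have iso1 : ∀ k, ∀ y ∈ t.desc v, t.depth y - t.depth v = k →
      t.depth (φ y) = t.depth w + k := by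
    intro k
    induction k with
    | zero =>
      intro y hy hk
      have hdle := t.depth_le_of_mem_desc hy
      have : y = v := t.eq_of_relDepth_zero hy (by omega)
      rw [this, hv0]
      omega
    | succ k ih =>
      intro y hy hk
      have hyne : y ≠ v := by
        intro he
        rw [he] at hk
        omega
      obtain ⟨hpar, hdpar⟩ := t.par_mem_desc_of_ne hy hyne
      have hdle := t.depth_le_of_mem_desc hy
      have ihp : t.depth (φ (t.par y)) = t.depth w + k := ih (t.par y) hpar (by omega)
      have hc := hcomm y hy hyne
      have hφy : φ y ∈ t.desc w := hmaps y hy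
      have hφyne : φ y ≠ w := by
        intro he
        rw [← hv0] at he
        exact hyne (hinj y hy v (t.mem_desc_self hv) he)
      obtain ⟨hp2, hd2⟩ := t.par_mem_desc_of_ne hφy hφyne
      rw [hc] at ihp
      omega
  -- rel-depth preservation, convenient form
  have iso1' : ∀ y ∈ t.desc v, t.depth (φ y) = t.depth w + (t.depth y - t.depth v) :=
    fun y hy => iso1 _ y hy rfl
  -- ISO2: φ maps desc x into desc (φ x)
  have iso2 : ∀ k, ∀ x ∈ t.desc v, ∀ y ∈ t.desc x, t.depth y - t.depth x = k →
      φ y ∈ t.desc (φ x) := by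
    intro k
    induction k with
    | zero =>
      intro x hx y hy hk
      have hdle := t.depth_le_of_mem_desc hy
      have : y = x := t.eq_of_relDepth_zero hy (by omega)
      rw [this]
      exact t.mem_desc_self (t.desc_subset_supp w (hmaps x hx))
    | succ k ih =>
      intro x hx y hy hk
      have hyx : y ≠ x := by
        intro he
        rw [he] at hk
        omega
      have hyv : y ∈ t.desc v := t.desc_trans hx hy
      have hyne : y ≠ v := by
        intro he
        have h1 := t.depth_le_of_mem_desc hy
        have h2 := t.depth_le_of_mem_desc hx
        rw [he] at h1
        have h3 := t.depth_le_of_mem_desc hx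
        have : x = v := t.eq_of_relDepth_zero hx (by omega)
        rw [← he] at this
        exact hyx this.symm
      obtain ⟨hparx, hdparx⟩ := t.par_mem_desc_of_ne hy hyx
      have hparv : t.par y ∈ t.desc v := t.desc_trans hx hparx
      have ihp : φ (t.par y) ∈ t.desc (φ x) := ih x hx (t.par y) hparx (by omega)
      have hc := hcomm y hyv hyne
      -- φ y ∈ desc (φ (par y))
      have hφy : φ y ∈ t.desc w := hmaps y hyv
      have hφys : φ y ∈ t.supp := t.desc_subset_supp w hφy
      have hd1 := iso1' y hyv
      have hd2 := iso1' (t.par y) hparv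
      have hdlev := t.depth_le_of_mem_desc hyv
      have hdlep := t.depth_le_of_mem_desc hparv
      have hφroot : φ y ≠ t.root := by
        intro he
        have : t.depth (φ y) = 0 := by rw [he, t.depth_root]
        omega
      have hmem : φ y ∈ t.desc (t.par (φ y)) := t.mem_desc_par hφys hφroot
      rw [← hc] at hmem
      exact t.desc_trans ihp hmem
  -- ISO3: surjectivity onto desc (φ x)
  have iso3 : ∀ k, ∀ x ∈ t.desc v, ∀ z ∈ t.desc (φ x), t.depth z - t.depth (φ x) = k →
      ∃ y ∈ t.desc x, φ y = z := by
    intro k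
    induction k with
    | zero =>
      intro x hx z hz hk
      have hdle := t.depth_le_of_mem_desc hz
      have : z = φ x := t.eq_of_relDepth_zero hz (by omega)
      exact ⟨x, t.mem_desc_self (t.desc_subset_supp v hx), this.symm⟩
    | succ k ih =>
      intro x hx z hz hk
      have hzx : z ≠ φ x := by
        intro he
        rw [he] at hk
        omega
      have hφx : φ x ∈ t.desc w := hmaps x hx
      have hzw : z ∈ t.desc w := t.desc_trans hφx hz
      obtain ⟨y, hy, hyz⟩ := hsurj z hzw
      have hyne : y ≠ v := by
        intro he
        rw [he, hv0] at hyz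
        have h1 := t.depth_le_of_mem_desc hz
        have h2 := t.depth_le_of_mem_desc hφx
        rw [← hyz] at h1
        have : φ x = w := t.eq_of_relDepth_zero hφx (by omega)
        rw [this, ← hyz] at hzx
        exact hzx rfl
      have hc := hcomm y hy hyne
      obtain ⟨hparz, hdparz⟩ := t.par_mem_desc_of_ne hz hzx
      have hpz : t.par z = φ (t.par y) := by rw [← hyz, ← hc]
      have hdlez := t.depth_le_of_mem_desc hparz
      obtain ⟨y', hy', hy'e⟩ := ih x hx (t.par z) hparz (by omega)
      have hpary : t.par y ∈ t.desc v := (t.par_mem_desc_of_ne hy hyne).1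
      have hy'v : y' ∈ t.desc v := t.desc_trans hx hy'
      have hy'p : y' = t.par y := by
        apply hinj y' hy'v (t.par y) hpary
        rw [hy'e, hpz]
      -- y ∈ desc (par y)
      have hys := t.desc_subset_supp v hy
      have hyroot : y ≠ t.root := by
        intro he
        apply hyne
        rw [he]
        exact (t.eq_root_of_root_mem_desc (he ▸ hy)).symm
      have hmem : y ∈ t.desc (t.par y) := t.mem_desc_par hys hyroot
      rw [← hy'p] at hmem
      exact ⟨y, t.desc_trans hy' hmem, hyz⟩
  -- heightAt preservation
  have iso4 : ∀ x ∈ t.desc v, t.heightAt x = t.heightAt (φ x) := by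
    intro x hx
    have hxs := t.desc_subset_supp v hx
    have hφx : φ x ∈ t.desc w := hmaps x hx
    have hφxs := t.desc_subset_supp w hφx
    apply le_antisymm
    · rw [t.heightAt_eq_sup hxs]
      apply Finset.sup_le
      intro y hy
      have hyv := t.desc_trans hx hy
      have h1 : φ y ∈ t.desc (φ x) := iso2 _ x hx y hy rfl
      have h2 := t.relDepth_le_heightAt hφxs h1
      have hd1 := iso1' y hyv
      have hd2 := iso1' x hx
      have := t.depth_le_of_mem_desc hy
      have := t.depth_le_of_mem_desc hx
      have := t.depth_le_of_mem_desc hyv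
      omega
    · rw [t.heightAt_eq_sup hφxs]
      apply Finset.sup_le
      intro z hz
      obtain ⟨y, hy, hyz⟩ := iso3 _ x hx z hz rfl
      have hyv := t.desc_trans hx hy
      have h2 := t.relDepth_le_heightAt hxs hy
      have hd1 := iso1' y hyv
      have hd2 := iso1' x hx
      have := t.depth_le_of_mem_desc hy
      have := t.depth_le_of_mem_desc hx
      have := t.depth_le_of_mem_desc hz
      rw [hyz] at hd1
      omega
  -- children correspondence
  rw [gam, gam]
  apply Finset.card_bij (fun c _ => φ c)
  · intro c hc
    rw [Finset.mem_filter] at hc ⊢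
    obtain ⟨hcc, hch⟩ := hc
    have hcd : c ∈ t.desc v := t.child_mem_desc hcc
    have hcv : c ≠ v := by
      intro he
      have := t.depth_child hcc
      rw [he] at this
      omega
    have hφc : φ c ∈ t.desc w := hmaps c hcd
    have hφcs := t.desc_subset_supp w hφc
    have hd := iso1' c hcd
    have hdc := t.depth_child hcc
    have hcd2 := t.depth_le_of_mem_desc hcd
    have hdφc : t.depth (φ c) = t.depth w + 1 := by omega
    have hpar : t.par (φ c) = w := by
      have hc2 := hcomm c hcd hcv
      rw [← hc2]
      have : t.par c = v := (t.mem_children.1 hcc).2.1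
      rw [this, hv0]
    have hroot : φ c ≠ t.root := by
      intro he
      rw [he, t.depth_root] at hdφc
      omega
    constructor
    · exact t.mem_children.2 ⟨hφcs, hpar, hroot⟩
    · rw [← iso4 c hcd]
      exact hch
  · intro c hc c' hc' he
    rw [Finset.mem_filter] at hc hc'
    exact hinj c (t.child_mem_desc hc.1) c' (t.child_mem_desc hc'.1) he
  · intro c' hc'
    rw [Finset.mem_filter] at hc'
    obtain ⟨hcc', hch'⟩ := hc'
    have hcd' : c' ∈ t.desc w := t.child_mem_desc hcc'
    obtain ⟨y, hy, hyz⟩ := hsurj c' hcd'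
    have hd := iso1' y hy
    have hdc' := t.depth_child hcc'
    have hdle := t.depth_le_of_mem_desc hy
    rw [hyz] at hd
    have hdy : t.depth y = t.depth v + 1 := by omega
    have hyv : y ≠ v := by
      intro he
      rw [he] at hdy
      omega
    have hys := t.desc_subset_supp v hy
    have hpar : t.par y = v := by
      have hc2 := hcomm y hy hyv
      rw [hyz] at hc2
      have hpc' : t.par c' = w := (t.mem_children.1 hcc').2.1
      have hpyd : t.par y ∈ t.desc v := (t.par_mem_desc_of_ne hy hyv).1
      apply hinj (t.par y) hpyd v (t.mem_desc_self hv)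
      rw [hc2, hpc', hv0]
    have hroot : y ≠ t.root := by
      intro he
      rw [he, t.depth_root] at hdy
      omega
    refine ⟨y, ?_, hyz⟩
    rw [Finset.mem_filter]
    refine ⟨t.mem_children.2 ⟨hys, hpar, hroot⟩, ?_⟩
    rw [iso4 y hy, hyz]
    exact hch'


lemma gam_eq_zero_of_le {v : ℕ} {h2 : ℕ} (h : t.heightAt v ≤ h2) : t.gam v h2 = 0 := by
  classical
  rw [gam, Finset.card_eq_zero, Finset.filter_eq_empty_iff]
  intro c hc
  have := t.heightAt_child_lt hc
  omega

lemma childToward_spec {v y : ℕ} (hy : y ∈ t.desc v) (hne : y ≠ v) :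
    t.par^[t.depth y - t.depth v - 1] y ∈ t.children v ∧
      y ∈ t.desc (t.par^[t.depth y - t.depth v - 1] y) := by
  have hys := t.desc_subset_supp v hy
  have hrel := t.desc_rel hy
  have hdle := t.depth_le_of_mem_desc hy
  set k := t.depth y - t.depth v with hk
  have hk1 : 1 ≤ k := by
    rcases Nat.eq_zero_or_pos k with h0 | h1
    · exact absurd (t.eq_of_relDepth_zero hy (by omega)) hne
    · exact h1
  set c := t.par^[k-1] y with hc
  have hcs : c ∈ t.supp := t.iterate_mem hys _
  have hdc : t.depth c = t.depth y - (k - 1) := t.depth_iterate hys (by omega)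
  have hpc : t.par c = v := by
    have h1 : t.par c = t.par^[1] (t.par^[k-1] y) := by rw [hc, Function.iterate_one]
    rw [h1, ← Function.iterate_add_apply]
    have h2 : 1 + (k-1) = k := by omega
    rw [h2, hrel]
  have hcr : c ≠ t.root := by
    intro h
    have : t.depth c = 0 := by rw [h, t.depth_root]
    omega
  refine ⟨t.mem_children.2 ⟨hcs, hpc, hcr⟩, ?_⟩
  apply t.mem_desc_of_rel hys (by omega)
  have : t.depth y - t.depth c = k - 1 := by omega
  rw [this]

lemma childToward_eq {v c y : ℕ} (hc : c ∈ t.children v) (hy : y ∈ t.desc c) :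
    t.par^[t.depth y - t.depth v - 1] y = c := by
  have hyv : y ∈ t.desc v := t.desc_child_subset hc hy
  have hne : y ≠ v := by
    intro he
    exact t.not_mem_desc_child hc (he ▸ hy)
  obtain ⟨h1, h2⟩ := t.childToward_spec hyv hne
  exact t.child_unique h1 hc h2 hy

lemma exists_height_pairing {v w : ℕ}
    (hcard : ∀ h2, t.gam v h2 = t.gam w h2) :
    ∃ e : ℕ → ℕ,
      (∀ c ∈ t.children v, e c ∈ t.children w ∧ t.heightAt (e c) = t.heightAt c) ∧
      (∀ c ∈ t.children v, ∀ c' ∈ t.children v, e c = e c' → c = c') ∧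
      (∀ c' ∈ t.children w, ∃ c ∈ t.children v, e c = c') := by
  classical
  have hcard' : ∀ h2, ((t.children v).filter (fun c => t.heightAt c = h2)).card =
      ((t.children w).filter (fun c => t.heightAt c = h2)).card := fun h2 => hcard h2
  set E : ∀ h2 : ℕ, {x // x ∈ (t.children v).filter (fun c => t.heightAt c = h2)} ≃
      {x // x ∈ (t.children w).filter (fun c => t.heightAt c = h2)} :=
    fun h2 => Finset.equivOfCardEq (hcard' h2) with hE
  set e : ℕ → ℕ := fun c => if hc : c ∈ t.children v then
      ((E (t.heightAt c)) ⟨c, Finset.mem_filter.2 ⟨hc, rfl⟩⟩ : ℕ) else c with hedef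
  have heval : ∀ c (hc : c ∈ t.children v),
      e c = ((E (t.heightAt c)) ⟨c, Finset.mem_filter.2 ⟨hc, rfl⟩⟩ : ℕ) := by
    intro c hc
    simp only [hedef]
    rw [dif_pos hc]
  refine ⟨e, ?_, ?_, ?_⟩
  · intro c hc
    rw [heval c hc]
    have hmem := ((E (t.heightAt c)) ⟨c, Finset.mem_filter.2 ⟨hc, rfl⟩⟩).2
    rw [Finset.mem_filter] at hmem
    exact ⟨hmem.1, hmem.2⟩
  · intro c hc c' hc' he
    rw [heval c hc, heval c' hc'] at he
    have hm1 := ((E (t.heightAt c)) ⟨c, Finset.mem_filter.2 ⟨hc, rfl⟩⟩).2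
    have hm2 := ((E (t.heightAt c')) ⟨c', Finset.mem_filter.2 ⟨hc', rfl⟩⟩).2
    rw [Finset.mem_filter] at hm1 hm2
    have hh : t.heightAt c = t.heightAt c' := by rw [← hm1.2, ← hm2.2, he]
    have key : ∀ h h', h = h' →
        ∀ (a : {x // x ∈ Finset.filter (fun c => t.heightAt c = h) (t.children v)})
          (a' : {x // x ∈ Finset.filter (fun c => t.heightAt c = h') (t.children v)}),
          (↑((E h) a) : ℕ) = ↑((E h') a') → (a : ℕ) = (a' : ℕ) := by
      rintro h h' rfl a a' hee
      exact congrArg Subtype.val ((E h).injective (Subtype.ext hee))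
    exact key (t.heightAt c) (t.heightAt c') hh _ _ he
  · intro c' hc'
    have hmem : c' ∈ (t.children w).filter (fun c => t.heightAt c = t.heightAt c') :=
      Finset.mem_filter.2 ⟨hc', rfl⟩
    set x := (E (t.heightAt c')).symm ⟨c', hmem⟩ with hx
    have hxm := x.2
    rw [Finset.mem_filter] at hxm
    refine ⟨x.1, hxm.1, ?_⟩
    rw [heval x.1 hxm.1]
    have hh : t.heightAt (x : ℕ) = t.heightAt c' := hxm.2
    have key2 : ∀ h h', h = h' →
        ∀ (a : {y // y ∈ Finset.filter (fun c => t.heightAt c = h) (t.children v)})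
          (a' : {y // y ∈ Finset.filter (fun c => t.heightAt c = h') (t.children v)}),
          (a : ℕ) = (a' : ℕ) → (↑((E h) a) : ℕ) = ↑((E h') a') := by
      rintro h h' rfl a a' hee
      rw [Subtype.ext hee]
    have step := key2 (t.heightAt (x : ℕ)) (t.heightAt c') hh
      ⟨(x : ℕ), Finset.mem_filter.2 ⟨hxm.1, rfl⟩⟩ x rfl
    refine step.trans ?_
    rw [hx, Equiv.apply_symm_apply]

lemma subtreeIso_of_gam_const
    (hgam : ∀ v ∈ t.supp, ∀ w ∈ t.supp, t.heightAt v = t.heightAt w →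
      ∀ h2, t.gam v h2 = t.gam w h2) :
    ∀ n, ∀ v ∈ t.supp, ∀ w ∈ t.supp, t.heightAt v = n → t.heightAt w = n →
      SubtreeIso t v t w := by
  classical
  intro n
  induction n using Nat.strong_induction_on with
  | _ n ih =>
  intro v hv w hw hhv hhw
  obtain ⟨e, he1, he2, he3⟩ := t.exists_height_pairing
    (hgam v hv w hw (by rw [hhv, hhw]))
  -- subtree isos for children
  have spec : ∀ c, c ∈ t.children v → SubtreeIso t c t (e c) := by
    intro c hc
    obtain ⟨hec, heh⟩ := he1 c hc
    apply ih (t.heightAt c) (by rw [← hhv]; exact t.heightAt_child_lt hc)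
      c (t.mem_children.1 hc).1 (e c) (t.mem_children.1 hec).1 rfl heh
  set ψ : ℕ → ℕ → ℕ := fun c => if hc : c ∈ t.children v then
    Classical.choose (spec c hc) else id with hψdef
  have hψ : ∀ c (hc : c ∈ t.children v),
      Set.BijOn (ψ c) (t.desc c : Set ℕ) (t.desc (e c) : Set ℕ) ∧ ψ c c = e c ∧
      ∀ x ∈ t.desc c, x ≠ c → ψ c (t.par x) = t.par (ψ c x) := by
    intro c hc
    have := Classical.choose_spec (spec c hc)
    simpa [hψdef, dif_pos hc] using this
  -- the global map
  set φ : ℕ → ℕ := fun y => if y = v then w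
    else ψ (t.par^[t.depth y - t.depth v - 1] y) y with hφdef
  have hφv : φ v = w := by simp [hφdef]
  have hφdesc : ∀ c, c ∈ t.children v → ∀ y ∈ t.desc c, φ y = ψ c y := by
    intro c hc y hy
    have hne : y ≠ v := fun he => t.not_mem_desc_child hc (he ▸ hy)
    rw [hφdef]
    simp only [if_neg hne]
    rw [t.childToward_eq hc hy]
  refine ⟨φ, ⟨?_, ?_, ?_⟩, hφv, ?_⟩
  · -- MapsTo
    intro y hy
    simp only [Finset.coe_filter, Set.mem_setOf_eq, Finset.mem_coe] at hy ⊢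
    by_cases hne : y = v
    · rw [hne, hφv]; exact t.mem_desc_self hw
    · obtain ⟨hc, hyc⟩ := t.childToward_spec hy hne
      set c := t.par^[t.depth y - t.depth v - 1] y
      rw [hφdesc c hc y hyc]
      have hbij := (hψ c hc).1
      have := hbij.mapsTo hyc
      exact t.desc_child_subset (he1 c hc).1 this
  · -- InjOn
    intro y hy y' hy' he
    simp only [Finset.mem_coe] at hy hy'
    by_cases h1 : y = v <;> by_cases h2 : y' = v
    · rw [h1, h2]
    · exfalso
      obtain ⟨hc', hyc'⟩ := t.childToward_spec hy' h2
      set c' := t.par^[t.depth y' - t.depth v - 1] y'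
      rw [h1, hφv, hφdesc c' hc' y' hyc'] at he
      have := (hψ c' hc').1.mapsTo hyc'
      rw [← he] at this
      exact t.not_mem_desc_child (he1 c' hc').1 this
    · exfalso
      obtain ⟨hc, hyc⟩ := t.childToward_spec hy h1
      set c := t.par^[t.depth y - t.depth v - 1] y
      rw [h2, hφv, hφdesc c hc y hyc] at he
      have := (hψ c hc).1.mapsTo hyc
      rw [he] at this
      exact t.not_mem_desc_child (he1 c hc).1 this
    · obtain ⟨hc, hyc⟩ := t.childToward_spec hy h1
      obtain ⟨hc', hyc'⟩ := t.childToward_spec hy' h2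
      set c := t.par^[t.depth y - t.depth v - 1] y
      set c' := t.par^[t.depth y' - t.depth v - 1] y'
      rw [hφdesc c hc y hyc, hφdesc c' hc' y' hyc'] at he
      have hm1 := (hψ c hc).1.mapsTo hyc
      have hm2 := (hψ c' hc').1.mapsTo hyc'
      rw [he] at hm1
      have hee : e c = e c' := t.child_unique (he1 c hc).1 (he1 c' hc').1 hm1 hm2
      have hcc : c = c' := he2 c hc c' hc' hee
      rw [hcc] at he hyc
      exact (hψ c' hc').1.injOn hyc hyc' he
  · -- SurjOn
    intro z hz
    simp only [Finset.mem_coe, Set.mem_image] at hz ⊢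
    by_cases hne : z = w
    · exact ⟨v, t.mem_desc_self hv, by rw [hφv, hne]⟩
    · obtain ⟨hc', hzc'⟩ := t.childToward_spec hz hne
      set c' := t.par^[t.depth z - t.depth w - 1] z
      obtain ⟨c, hc, hec⟩ := he3 c' hc'
      rw [← hec] at hzc'
      obtain ⟨y, hy, hyz⟩ := (hψ c hc).1.surjOn hzc'
      simp only [Finset.mem_coe] at hy
      refine ⟨y, t.desc_child_subset hc hy, ?_⟩
      rw [hφdesc c hc y hy]
      exact hyz
  · -- commuting
    intro y hy hne
    obtain ⟨hc, hyc⟩ := t.childToward_spec hy hne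
    set c := t.par^[t.depth y - t.depth v - 1] y
    by_cases hyeq : y = c
    · have hpar : t.par y = v := by
        rw [hyeq]; exact (t.mem_children.1 hc).2.1
      rw [hpar, hφv, hφdesc c hc y hyc, hyeq, (hψ c hc).2.1]
      exact ((t.mem_children.1 (he1 c hc).1).2.1).symm
    · have hpyc : t.par y ∈ t.desc c := (t.par_mem_desc_of_ne hyc hyeq).1
      rw [hφdesc c hc y hyc, hφdesc c hc (t.par y) hpyc]
      exact (hψ c hc).2.2 y hyc hyeq


end FTree

/-- A tree is self-nested if and only if, for every pair of heights
`0 ≤ h2 < h1 ≤ H(t)`, all the components of the height-profile entry `ρ_t(h1,h2)` are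
equal. -/
theorem selfNested_iff_profile_constant (t : FTree) :
    t.SelfNested ↔
      ∀ h1 h2, h2 < h1 → h1 ≤ t.height →
        ∀ x ∈ t.profile h1 h2, ∀ y ∈ t.profile h1 h2, x = y := by
  classical
  constructor
  · intro hsn h1 h2 _ _ x hx y hy
    rw [FTree.profile, Multiset.mem_map] at hx hy
    obtain ⟨a, ha, hax⟩ := hx
    obtain ⟨b, hb, hby⟩ := hy
    rw [Finset.mem_val, Finset.mem_filter] at ha hb
    have hiso := hsn a ha.1 b hb.1 (by rw [ha.2, hb.2])
    rw [← hax, ← hby]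
    exact t.gam_eq_of_subtreeIso ha.1 hb.1 hiso h2
  · intro hp v hv w hw hh
    apply t.subtreeIso_of_gam_const ?_ (t.heightAt v) v hv w hw rfl hh.symm
    intro a ha b hb hab h2
    by_cases hlt : h2 < t.heightAt a
    · apply hp (t.heightAt a) h2 hlt (t.heightAt_le_height ha)
      · rw [FTree.profile, Multiset.mem_map]
        exact ⟨a, Finset.mem_val.mpr (Finset.mem_filter.2 ⟨ha, rfl⟩), rfl⟩
      · rw [FTree.profile, Multiset.mem_map]
        exact ⟨b, Finset.mem_val.mpr (Finset.mem_filter.2 ⟨hb, hab.symm⟩), rfl⟩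
    · rw [t.gam_eq_zero_of_le (by omega), t.gam_eq_zero_of_le (by omega)]
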